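/- For every μ, θ ∈ ℝ, σ_W > 0 and σ ≥ 0, with s = √(σ_W² + σ²) and t = (θ − μ)/s, one has ∫_{ℝ²} (μ + σ_W z₁) · 1{μ + σ_W z₁ + σ z₂ ≥ θ} φ(z₁) φ(z₂) dz₁ dz₂ = μ·Φ^c(t) + (σ_W²/s)·φ(t). (This is the expected latent quality mass of the candidates whose noisy estimate Ŵ = W + σ Z₂ exceeds the threshold θ, when W = μ + σ_W Z₁.) -/

import Mathlib

open MeasureTheory Set

/-- Standard normal density. -/
noncomputable def phi (t : ℝ) : ℝ := Real.exp (-t ^ 2 / 2) / Real.sqrt (2 * Real.pi)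

/-- Standard normal CDF. -/
noncomputable def Phi (t : ℝ) : ℝ := ∫ u in Set.Iic t, phi u

/-- Standard normal complementary CDF. -/
noncomputable def Phic (t : ℝ) : ℝ := 1 - Phi t


open Real Filter

lemma phi_eq (t : ℝ) : phi t = (Real.sqrt (2*Real.pi))⁻¹ * Real.exp (-(1/2:ℝ) * t^2) := by
  rw [phi]; ring_nf

lemma phi_fun_eq : phi = fun t => (Real.sqrt (2*Real.pi))⁻¹ * Real.exp (-(1/2:ℝ) * t^2) :=
  funext phi_eq

lemma phi_nonneg (t : ℝ) : 0 ≤ phi t := by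
  rw [phi_eq]; positivity

lemma continuous_phi : Continuous phi := by
  rw [phi_fun_eq]
  exact continuous_const.mul ((continuous_const.mul (continuous_pow 2)).rexp)

lemma integrable_phi : Integrable phi := by
  rw [phi_fun_eq]
  exact (integrable_exp_neg_mul_sq (by norm_num : (0:ℝ) < 1/2)).const_mul _

lemma sqrt_two_pi_pos : (0:ℝ) < Real.sqrt (2*Real.pi) :=
  Real.sqrt_pos.mpr (by positivity)

lemma integral_phi : ∫ x, phi x = 1 := by
  rw [phi_fun_eq, integral_const_mul, integral_gaussian]
  rw [show Real.pi / (1/2) = 2 * Real.pi by ring]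
  exact inv_mul_cancel₀ sqrt_two_pi_pos.ne'

lemma integrable_id_phi : Integrable (fun x => x * phi x) := by
  have h := (integrable_mul_exp_neg_mul_sq (by norm_num : (0:ℝ) < 1/2)).const_mul
    ((Real.sqrt (2*Real.pi))⁻¹)
  refine h.congr (Eventually.of_forall fun x => ?_)
  simp only []
  rw [phi_eq]; ring

lemma integrable_abs_phi : Integrable (fun x => |x| * phi x) := by
  refine integrable_id_phi.abs.congr (Eventually.of_forall fun x => ?_)
  simp only []
  rw [abs_mul, abs_of_nonneg (phi_nonneg x)]

lemma hasDerivAt_neg_phi (x : ℝ) : HasDerivAt (fun y => -phi y) (x * phi x) x := by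
  have h1 : HasDerivAt (fun y : ℝ => -(1/2:ℝ) * y^2) (-(1/2:ℝ) * (2*x^1)) x :=
    (hasDerivAt_pow 2 x).const_mul _
  have h2 := (h1.exp.const_mul ((Real.sqrt (2*Real.pi))⁻¹)).neg
  have : (fun y => -((Real.sqrt (2*Real.pi))⁻¹ * Real.exp (-(1/2:ℝ) * y^2))) = fun y => -phi y := by
    funext y; rw [phi_eq]
  simp only [Pi.neg_def] at h2
  rw [this] at h2
  refine h2.congr_deriv ?_
  rw [phi_eq]; ring

lemma tendsto_phi_atTop : Tendsto phi atTop (nhds 0) := by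
  rw [phi_fun_eq]
  rw [show (0:ℝ) = (Real.sqrt (2*Real.pi))⁻¹ * 0 by ring]
  apply Tendsto.const_mul
  apply Real.tendsto_exp_atBot.comp
  have h : Tendsto (fun x : ℝ => x^2) atTop atTop := tendsto_pow_atTop two_ne_zero
  have := h.const_mul_atTop_of_neg (by norm_num : (-(1/2):ℝ) < 0)
  simpa using this

lemma tendsto_phi_atBot : Tendsto phi atBot (nhds 0) := by
  have := tendsto_phi_atTop.comp tendsto_neg_atBot_atTop
  refine this.congr fun x => ?_
  simp only [Function.comp]
  rw [phi_eq, phi_eq, neg_pow]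
  norm_num

lemma integral_Ioi_id_phi (t : ℝ) : ∫ x in Ioi t, x * phi x = phi t := by
  have h := integral_Ioi_of_hasDerivAt_of_tendsto' (f := fun y => -phi y)
    (f' := fun x => x * phi x) (a := t)
    (fun x _ => hasDerivAt_neg_phi x) integrable_id_phi.integrableOn
    (by simpa using tendsto_phi_atTop.neg)
  simpa using h

lemma integral_Ioi_phi (t : ℝ) : ∫ x in Ioi t, phi x = Phic t := by
  have h := intervalIntegral.integral_Iic_add_Ioi (b := t) (f := phi) (μ := volume)
    integrable_phi.integrableOn integrable_phi.integrableOn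
  rw [integral_phi] at h
  rw [Phic, Phi]; linarith

lemma integral_id_phi : ∫ x, x * phi x = 0 := by
  have h := integral_neg_eq_self (fun x => x * phi x) (volume : Measure ℝ)
  have h2 : ∫ x : ℝ, -x * phi (-x) = ∫ x : ℝ, -(x * phi x) := by
    congr 1; funext x
    rw [show phi (-x) = phi x by rw [phi_eq, phi_eq, neg_pow]; norm_num]
    ring
  rw [h2, integral_neg] at h
  linarith

lemma phi_mul_phi {a b c d : ℝ} (h : a^2 + b^2 = c^2 + d^2) :
    phi a * phi b = phi c * phi d := by
  simp only [phi_eq]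
  rw [mul_mul_mul_comm, ← Real.exp_add, mul_mul_mul_comm, ← Real.exp_add]
  congr 2
  linarith

/-- The expected latent-quality mass of candidates whose noisy estimate
`Ŵ = W + σ Z₂` (with `W = μ + σ_W Z₁`) exceeds the threshold `θ` equals
`μ Φᶜ(t) + (σ_W²/s) φ(t)` where `s = √(σ_W² + σ²)` and `t = (θ - μ)/s`. -/
theorem quality_mass_above_threshold
    (μ θ σW σ : ℝ) (hσW : 0 < σW) (hσ : 0 ≤ σ) :
    (∫ z : ℝ × ℝ,
      (μ + σW * z.1) * (if θ ≤ μ + σW * z.1 + σ * z.2 then (1 : ℝ) else 0)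
        * phi z.1 * phi z.2)
    = μ * Phic ((θ - μ) / Real.sqrt (σW ^ 2 + σ ^ 2))
      + (σW ^ 2 / Real.sqrt (σW ^ 2 + σ ^ 2))
        * phi ((θ - μ) / Real.sqrt (σW ^ 2 + σ ^ 2)) := by
  have hs2 : (0:ℝ) < σW^2 + σ^2 := by positivity
  set s : ℝ := Real.sqrt (σW^2 + σ^2) with hs_def
  have hs : 0 < s := Real.sqrt_pos.mpr hs2
  have hss : s^2 = σW^2 + σ^2 := Real.sq_sqrt hs2.le
  set t : ℝ := (θ - μ)/s with ht_def
  set F : ℝ × ℝ → ℝ := fun z =>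
    (μ + σW * z.1) * (if θ ≤ μ + σW * z.1 + σ * z.2 then (1:ℝ) else 0)
      * phi z.1 * phi z.2 with hF
  set L : (ℝ × ℝ) →ₗ[ℝ] (ℝ × ℝ) :=
    Matrix.toLin (Module.Basis.finTwoProd ℝ) (Module.Basis.finTwoProd ℝ)
      !![σW/s, -(σ/s); σ/s, σW/s] with hL_def
  have hLapply : ∀ w : ℝ × ℝ,
      L w = ((σW/s) * w.1 + (-(σ/s)) * w.2, (σ/s) * w.1 + (σW/s) * w.2) :=
    fun w => Matrix.toLin_finTwoProd_apply _ _ _ _ w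
  have hdet : LinearMap.det L = 1 := by
    rw [hL_def, LinearMap.det_toLin, Matrix.det_fin_two_of]
    field_simp
    linarith [hss]
  haveI : (volume : Measure (ℝ × ℝ)).IsAddHaarMeasure :=
    Measure.prod.instIsAddHaarMeasure _ _
  have hmap : Measure.map L volume = volume := by
    rw [Measure.map_linearMap_addHaar_eq_smul_addHaar volume (by rw [hdet]; norm_num), hdet]
    simp
  have hmeasL : Measurable L := L.continuous_of_finiteDimensional.measurable
  have hFmeas : AEStronglyMeasurable F volume := by
    apply Measurable.aestronglyMeasurable
    apply Measurable.mul
    apply Measurable.mul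
    apply Measurable.mul
    · exact measurable_const.add (measurable_fst.const_mul σW)
    · refine Measurable.ite ?_ measurable_const measurable_const
      exact measurableSet_le measurable_const
        ((measurable_const.add (measurable_fst.const_mul σW)).add
          (measurable_snd.const_mul σ))
    · exact continuous_phi.measurable.comp measurable_fst
    · exact continuous_phi.measurable.comp measurable_snd
  have step1 : (∫ z : ℝ × ℝ, F z) = ∫ w : ℝ × ℝ, F (L w) := by
    conv_lhs => rw [← hmap]
    rw [integral_map hmeasL.aemeasurable (by rwa [hmap])]
  set A : ℝ := σW^2 / s with hA
  set B : ℝ := σW * σ / s with hB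
  have key : ∀ w : ℝ × ℝ,
      F (L w) = (μ + A * w.1 - B * w.2) * (if t ≤ w.1 then (1:ℝ) else 0)
        * phi w.1 * phi w.2 := by
    intro w
    rw [hLapply]
    simp only [hF]
    have e2 : μ + σW * ((σW/s) * w.1 + (-(σ/s)) * w.2)
        + σ * ((σ/s) * w.1 + (σW/s) * w.2) = μ + s * w.1 := by
      field_simp
      linear_combination (-w.1) * hss
    have e3 : (if θ ≤ μ + s * w.1 then (1:ℝ) else 0) = (if t ≤ w.1 then (1:ℝ) else 0) := by
      congr 1
      simp only [eq_iff_iff, ht_def, div_le_iff₀ hs]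
      constructor <;> intro h <;> nlinarith
    have e1 : μ + σW * ((σW/s) * w.1 + (-(σ/s)) * w.2) = μ + A * w.1 - B * w.2 := by
      rw [hA, hB]; field_simp; ring
    have e4 : phi ((σW/s) * w.1 + (-(σ/s)) * w.2) * phi ((σ/s) * w.1 + (σW/s) * w.2)
        = phi w.1 * phi w.2 := by
      apply phi_mul_phi
      field_simp
      linear_combination (-(w.1^2 + w.2^2)) * hss
    rw [e2, e3, e1]
    rw [mul_assoc, e4, ← mul_assoc]
  have hA0 : 0 ≤ A := by positivity
  have hB0 : 0 ≤ B := by positivity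
  set G : ℝ × ℝ → ℝ := fun w =>
    (μ + A * w.1 - B * w.2) * (if t ≤ w.1 then (1:ℝ) else 0) * phi w.1 * phi w.2 with hG
  have hGmeas : AEStronglyMeasurable G volume := by
    apply Measurable.aestronglyMeasurable
    refine ((((measurable_const.add (measurable_fst.const_mul A)).sub
      (measurable_snd.const_mul B)).mul ?_).mul
      (continuous_phi.measurable.comp measurable_fst)).mul
      (continuous_phi.measurable.comp measurable_snd)
    exact Measurable.ite (measurableSet_le measurable_const measurable_fst)
      measurable_const measurable_const
  have hbound_int : Integrable (fun w : ℝ × ℝ =>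
      |μ| * (phi w.1 * phi w.2) + A * ((|w.1| * phi w.1) * phi w.2)
        + B * (phi w.1 * (|w.2| * phi w.2))) := by
    refine Integrable.add (Integrable.add ?_ ?_) ?_
    · exact (integrable_phi.mul_prod integrable_phi).const_mul _
    · exact (integrable_abs_phi.mul_prod integrable_phi).const_mul _
    · exact (integrable_phi.mul_prod integrable_abs_phi).const_mul _
  have hGint : Integrable G := by
    refine hbound_int.mono' hGmeas (Eventually.of_forall fun w => ?_)
    simp only [hG, Real.norm_eq_abs]
    have habs : |μ + A * w.1 - B * w.2| ≤ |μ| + A * |w.1| + B * |w.2| := by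
      have h1 := abs_add_le (μ + A * w.1) (-(B * w.2))
      have h2 := abs_add_le μ (A * w.1)
      rw [abs_neg, abs_mul, abs_of_nonneg hB0] at h1
      rw [abs_mul, abs_of_nonneg hA0] at h2
      have h3 : μ + A * w.1 - B * w.2 = (μ + A * w.1) + (-(B * w.2)) := by ring
      rw [h3]
      linarith
    have hite : |if t ≤ w.1 then (1:ℝ) else 0| ≤ 1 := by split <;> simp
    have hphi1 := phi_nonneg w.1
    have hphi2 := phi_nonneg w.2
    calc |(μ + A * w.1 - B * w.2) * (if t ≤ w.1 then (1:ℝ) else 0) * phi w.1 * phi w.2|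
        = |μ + A * w.1 - B * w.2| * |if t ≤ w.1 then (1:ℝ) else 0| * phi w.1 * phi w.2 := by
          rw [abs_mul, abs_mul, abs_mul, abs_of_nonneg hphi1, abs_of_nonneg hphi2]
      _ ≤ (|μ| + A * |w.1| + B * |w.2|) * 1 * phi w.1 * phi w.2 := by
          gcongr
      _ = |μ| * (phi w.1 * phi w.2) + A * ((|w.1| * phi w.1) * phi w.2)
            + B * (phi w.1 * (|w.2| * phi w.2)) := by ring
  have step2 : (∫ w : ℝ × ℝ, G w) = ∫ u : ℝ, ∫ v : ℝ, G (u, v) := by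
    rw [Measure.volume_eq_prod] at hGint ⊢
    exact integral_prod G hGint
  have inner : ∀ u : ℝ, (∫ v : ℝ, G (u, v))
      = (if t ≤ u then (1:ℝ) else 0) * phi u * (μ + A * u) := by
    intro u
    have hfe : (fun v : ℝ => G (u, v)) = fun v =>
        ((if t ≤ u then (1:ℝ) else 0) * phi u) * ((μ + A * u) * phi v)
        - ((if t ≤ u then (1:ℝ) else 0) * phi u * B) * (v * phi v) := by
      funext v; simp only [hG]; ring
    rw [hfe, integral_sub ((integrable_phi.const_mul _).const_mul _)
        (integrable_id_phi.const_mul _),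
      integral_const_mul, integral_const_mul, integral_const_mul, integral_phi,
      integral_id_phi]
    ring
  have outer : (∫ u : ℝ, (if t ≤ u then (1:ℝ) else 0) * phi u * (μ + A * u))
      = μ * Phic t + A * phi t := by
    have hind : (fun u : ℝ => (if t ≤ u then (1:ℝ) else 0) * phi u * (μ + A * u))
        = Set.indicator (Ici t) (fun u => μ * phi u + A * (u * phi u)) := by
      funext u
      rw [Set.indicator_apply]
      by_cases h : t ≤ u
      · simp only [mem_Ici, h, if_true]; ring
      · simp [mem_Ici, h]
    rw [hind, integral_indicator measurableSet_Ici, integral_Ici_eq_integral_Ioi,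
      integral_add ((integrable_phi.const_mul μ).integrableOn)
        ((integrable_id_phi.const_mul A).integrableOn),
      integral_const_mul, integral_const_mul, integral_Ioi_phi, integral_Ioi_id_phi]
  calc (∫ z : ℝ × ℝ, F z) = ∫ w : ℝ × ℝ, F (L w) := step1
    _ = ∫ w : ℝ × ℝ, G w := by
        congr 1; funext w; rw [key w]
    _ = ∫ u : ℝ, ∫ v : ℝ, G (u, v) := step2
    _ = ∫ u : ℝ, (if t ≤ u then (1:ℝ) else 0) * phi u * (μ + A * u) := by
        congr 1; funext u; rw [inner u]
    _ = μ * Phic t + A * phi t := outer
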